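/- Let C ≥ 1. Let A : ℤ₊ × ℤ₊ → ℂ and λ : ℤ₊ → ℂ satisfy ∑_{n ≤ x} |A(r,n)|² ≤ C·r^{5/7}·x for all positive integers r and all real x ≥ 1, and ∑_{n ≤ x} |λ(n)|² ≤ C·x for all real x ≥ 1. Then for every ε > 0 there exists a constant C′ = C′(C, ε) such that: for all real M ≥ 1, all real t, all real N with 1 ≤ N ≤ (M·(1+|t|))^{3+ε}, every V : ℝ → ℂ with |V(x)| ≤ 1 for all x and V(x) = 0 for x ∉ [1,2], and every u : ℤ₊ → ℂ with |u(n)| ≤ 1, one has ∑_{r ≥ M^{1/8}·(1+|t|)^{3/10}} |∑_{n ≥ 1} A(r,n)·λ(n)·u(n)·V(r²·n/N)| ≤ C′·N^{1/2}·M^{3/2−1/16}·(1+|t|)^{3/2−3/20}·(M·(1+|t|))^ε. -/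

import Mathlib

set_option maxHeartbeats 1000000 in
/-- **Large-`r` contribution in the approximate functional equation.**
With the Kim–Sarnak exponent `5/7 = 2·(5/14)` in the second-moment bound for
`A(r,·)` and the Rankin–Selberg bound for `λ`, the terms with
`r ≥ M^{1/8}(1+|t|)^{3/10}` contribute at most
`N^{1/2} M^{3/2-1/16} (1+|t|)^{3/2-3/20} (M(1+|t|))^ε`. -/
theorem large_r_contribution (C : ℝ) (hC : 1 ≤ C)
    (A : ℕ → ℕ → ℂ) (l : ℕ → ℂ)
    (hA : ∀ r : ℕ, 0 < r → ∀ x : ℝ, 1 ≤ x →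
      ∑ n ∈ Finset.Icc 1 ⌊x⌋₊, ‖A r n‖ ^ 2
        ≤ C * (r : ℝ) ^ ((5 : ℝ) / 7) * x)
    (hl : ∀ x : ℝ, 1 ≤ x →
      ∑ n ∈ Finset.Icc 1 ⌊x⌋₊, ‖l n‖ ^ 2 ≤ C * x) :
    ∀ ε : ℝ, 0 < ε → ∃ C' : ℝ, ∀ M : ℝ, 1 ≤ M → ∀ t : ℝ, ∀ N : ℝ,
      1 ≤ N → N ≤ (M * (1 + |t|)) ^ ((3 : ℝ) + ε) →
      ∀ V : ℝ → ℂ, (∀ x : ℝ, ‖V x‖ ≤ 1) →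
        (∀ x : ℝ, x ∉ Set.Icc (1 : ℝ) 2 → V x = 0) →
      ∀ u : ℕ → ℂ, (∀ n : ℕ, ‖u n‖ ≤ 1) →
      ∑' r : {r : ℕ // M ^ ((1 : ℝ) / 8) * (1 + |t|) ^ ((3 : ℝ) / 10) ≤ (r : ℝ)},
        ‖∑' n : {n : ℕ // 1 ≤ n},
          A r.1 n.1 * l n.1 * u n.1 * V (((r.1 : ℝ)) ^ 2 * (n.1 : ℝ) / N)‖
        ≤ C' * N ^ ((1 : ℝ) / 2) * M ^ ((3 : ℝ) / 2 - 1 / 16)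
            * (1 + |t|) ^ ((3 : ℝ) / 2 - 3 / 20) * (M * (1 + |t|)) ^ ε := by
  intro ε hε
  -- the absolute constant coming from the tail of the `r`-sum
  set c : ℝ := ∑' r : ℕ, (r : ℝ) ^ (-(15 : ℝ)/14) with hc
  have hsum15 : Summable (fun r : ℕ => (r : ℝ) ^ (-(15 : ℝ)/14)) :=
    Real.summable_nat_rpow.mpr (by norm_num)
  have hc0 : 0 ≤ c := tsum_nonneg fun r => Real.rpow_nonneg (Nat.cast_nonneg r) _
  refine ⟨2 * C * c, ?_⟩
  intro M hM t N hN hNle V hV hV0 u hu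
  set T : ℝ := 1 + |t| with hT
  have hT1 : (1 : ℝ) ≤ T := by
    have := abs_nonneg t
    rw [hT]; linarith
  have hM0 : (0 : ℝ) < M := lt_of_lt_of_le one_pos hM
  have hT0 : (0 : ℝ) < T := lt_of_lt_of_le one_pos hT1
  have hN0 : (0 : ℝ) < N := lt_of_lt_of_le one_pos hN
  set R : ℝ := M ^ ((1 : ℝ)/8) * T ^ ((3 : ℝ)/10) with hR
  have hR1 : (1 : ℝ) ≤ R := by
    have h1 : (1 : ℝ) ≤ M ^ ((1 : ℝ)/8) := Real.one_le_rpow hM (by norm_num)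
    have h2 : (1 : ℝ) ≤ T ^ ((3 : ℝ)/10) := Real.one_le_rpow hT1 (by norm_num)
    calc (1:ℝ) = 1 * 1 := by ring
      _ ≤ M ^ ((1 : ℝ)/8) * T ^ ((3 : ℝ)/10) := by gcongr
  have hR0 : (0 : ℝ) < R := lt_of_lt_of_le one_pos hR1
  set P : ℝ := M * T with hP
  have hP1 : (1 : ℝ) ≤ P := by
    rw [hP]; nlinarith
  have hP0 : (0 : ℝ) < P := lt_of_lt_of_le one_pos hP1
  -- Step A : bound for an individual inner sum
  have inner_bound : ∀ r : ℕ, R ≤ (r : ℝ) →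
      ‖∑' n : {n : ℕ // 1 ≤ n},
          A r n.1 * l n.1 * u n.1 * V (((r : ℝ)) ^ 2 * (n.1 : ℝ) / N)‖
        ≤ 2 * C * N * (r : ℝ) ^ (-(23 : ℝ)/14) := by
    intro r hr
    have hr1 : (1 : ℝ) ≤ (r : ℝ) := hR1.trans hr
    have hr0 : (0 : ℝ) < (r : ℝ) := lt_of_lt_of_le one_pos hr1
    have hrn : 0 < r := by exact_mod_cast hr0
    set K : ℕ := ⌊2 * N / (r : ℝ) ^ 2⌋₊ with hK
    have hfloor0 : (0:ℝ) ≤ 2 * N / (r : ℝ) ^ 2 := by positivity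
    -- the tsum is a finite sum
    have hts : (∑' n : {n : ℕ // 1 ≤ n},
          A r n.1 * l n.1 * u n.1 * V (((r : ℝ)) ^ 2 * (n.1 : ℝ) / N))
        = ∑ n ∈ (Finset.Icc 1 K).subtype (fun n => 1 ≤ n),
          A r n.1 * l n.1 * u n.1 * V (((r : ℝ)) ^ 2 * (n.1 : ℝ) / N) := by
      refine tsum_eq_sum ?_
      rintro ⟨n, hn⟩ hns
      rw [Finset.mem_subtype, Finset.mem_Icc] at hns
      push_neg at hns
      have hKn : K < n := hns hn
      have hx : 2 * N / (r : ℝ) ^ 2 < (n : ℝ) := (Nat.floor_lt hfloor0).1 hKn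
      have h2 : (2 : ℝ) < (r : ℝ) ^ 2 * (n : ℝ) / N := by
        rw [lt_div_iff₀ hN0]
        have := (div_lt_iff₀ (by positivity : (0:ℝ) < (r:ℝ)^2)).1 hx
        nlinarith
      have : V ((r : ℝ) ^ 2 * (n : ℝ) / N) = 0 := by
        apply hV0
        simp only [Set.mem_Icc, not_and_or, not_le]
        right; exact h2
      simp [this]
    rw [hts]
    -- bound by a sum of absolute values
    have habs : ‖∑ n ∈ (Finset.Icc 1 K).subtype (fun n => 1 ≤ n),
          A r n.1 * l n.1 * u n.1 * V (((r : ℝ)) ^ 2 * (n.1 : ℝ) / N)‖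
        ≤ ∑ n ∈ Finset.Icc 1 K, ‖A r n‖ * ‖l n‖ := by
      refine le_trans (norm_sum_le _ _) ?_
      have : ∑ n ∈ (Finset.Icc 1 K).subtype (fun n => 1 ≤ n),
            ‖A r n.1 * l n.1 * u n.1 * V (((r : ℝ)) ^ 2 * (n.1 : ℝ) / N)‖
          = ∑ n ∈ (Finset.Icc 1 K).filter (fun n => 1 ≤ n),
            ‖A r n * l n * u n * V (((r : ℝ)) ^ 2 * (n : ℝ) / N)‖ :=
        Finset.sum_subtype_eq_sum_filter
          (fun n => ‖A r n * l n * u n * V (((r : ℝ)) ^ 2 * (n : ℝ) / N)‖)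
      rw [this, Finset.filter_true_of_mem (fun n hn => (Finset.mem_Icc.1 hn).1)]
      refine Finset.sum_le_sum fun n _ => ?_
      rw [norm_mul, norm_mul, norm_mul]
      calc ‖A r n‖ * ‖l n‖ * ‖u n‖
              * ‖V (((r : ℝ)) ^ 2 * (n : ℝ) / N)‖
          ≤ ‖A r n‖ * ‖l n‖ * ‖u n‖ :=
            mul_le_of_le_one_right (by positivity) (hV _)
        _ ≤ ‖A r n‖ * ‖l n‖ :=
            mul_le_of_le_one_right (by positivity) (hu _)
    refine habs.trans ?_
    by_cases h2N : 1 ≤ 2 * N / (r : ℝ) ^ 2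
    · -- main case: Cauchy–Schwarz via weighted AM–GM
      set x : ℝ := 2 * N / (r : ℝ) ^ 2 with hxdef
      set w : ℝ := (r : ℝ) ^ ((5 : ℝ)/14) with hw
      have hw0 : (0 : ℝ) < w := Real.rpow_pos_of_pos hr0 _
      have hamgm : ∀ a b : ℝ, a * b ≤ a^2/(2*w) + w*b^2/2 := by
        intro a b
        have hkey : a^2/(2*w) + w*b^2/2 - a*b = (a - w*b)^2/(2*w) := by
          field_simp; ring
        nlinarith [div_nonneg (sq_nonneg (a - w*b)) (le_of_lt (by positivity : (0:ℝ) < 2*w))]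
      have hsplit : ∑ n ∈ Finset.Icc 1 K, ‖A r n‖ * ‖l n‖
          ≤ (∑ n ∈ Finset.Icc 1 K, ‖A r n‖ ^ 2) / (2*w)
            + w * (∑ n ∈ Finset.Icc 1 K, ‖l n‖ ^ 2) / 2 := by
        calc ∑ n ∈ Finset.Icc 1 K, ‖A r n‖ * ‖l n‖
            ≤ ∑ n ∈ Finset.Icc 1 K,
              (‖A r n‖ ^ 2 / (2*w) + w * ‖l n‖ ^ 2 / 2) :=
              Finset.sum_le_sum fun n _ => hamgm _ _
          _ = (∑ n ∈ Finset.Icc 1 K, ‖A r n‖ ^ 2) / (2*w)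
              + w * (∑ n ∈ Finset.Icc 1 K, ‖l n‖ ^ 2) / 2 := by
              rw [Finset.sum_add_distrib, ← Finset.sum_div, ← Finset.sum_div,
                Finset.mul_sum]
      have hAx := hA r hrn x h2N
      have hlx := hl x h2N
      have hww : w * w = (r : ℝ) ^ ((5 : ℝ)/7) := by
        rw [hw, ← Real.rpow_add hr0]; norm_num
      have hfin : (C * (r : ℝ) ^ ((5 : ℝ)/7) * x) / (2*w) + w * (C * x) / 2
          = 2 * C * N * (r : ℝ) ^ (-(23 : ℝ)/14) := by
        have h23 : (r : ℝ) ^ (-(23 : ℝ)/14) = w / (r : ℝ) ^ 2 := by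
          rw [hw, ← Real.rpow_natCast (r:ℝ) 2, ← Real.rpow_sub hr0]
          norm_num
        rw [h23, ← hww, hxdef]
        field_simp
        ring
      calc ∑ n ∈ Finset.Icc 1 K, ‖A r n‖ * ‖l n‖
          ≤ (∑ n ∈ Finset.Icc 1 K, ‖A r n‖ ^ 2) / (2*w)
            + w * (∑ n ∈ Finset.Icc 1 K, ‖l n‖ ^ 2) / 2 := hsplit
        _ ≤ (C * (r : ℝ) ^ ((5 : ℝ)/7) * x) / (2*w) + w * (C * x) / 2 := by gcongr
        _ = 2 * C * N * (r : ℝ) ^ (-(23 : ℝ)/14) := hfin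
    · -- degenerate case: the range is empty
      push_neg at h2N
      have hK0 : K = 0 := Nat.floor_eq_zero.2 h2N
      rw [hK0]
      simp only [Finset.Icc_eq_empty_of_lt (by norm_num : (0:ℕ) < 1), Finset.sum_empty]
      positivity
  -- Step B : sum over r
  set S := {r : ℕ // R ≤ (r : ℝ)} with hS
  set g : S → ℝ := fun r => ‖∑' n : {n : ℕ // 1 ≤ n},
      A r.1 n.1 * l n.1 * u n.1 * V (((r.1 : ℝ)) ^ 2 * (n.1 : ℝ) / N)‖ with hg
  have hsum15S : Summable (fun r : S => ((r : ℕ) : ℝ) ^ (-(15 : ℝ)/14)) :=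
    hsum15.subtype _
  have hterm : ∀ r : S, g r ≤ 2 * C * N * R ^ (-(4 : ℝ)/7) * ((r : ℕ) : ℝ) ^ (-(15 : ℝ)/14) := by
    intro r
    have hr : R ≤ ((r : ℕ) : ℝ) := r.2
    have hr0 : (0 : ℝ) < ((r : ℕ) : ℝ) := lt_of_lt_of_le hR0 hr
    have h1 : g r ≤ 2 * C * N * ((r : ℕ) : ℝ) ^ (-(23 : ℝ)/14) := inner_bound r.1 hr
    have h2 : ((r : ℕ) : ℝ) ^ (-(23 : ℝ)/14)
        = ((r : ℕ) : ℝ) ^ (-(4 : ℝ)/7) * ((r : ℕ) : ℝ) ^ (-(15 : ℝ)/14) := by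
      rw [← Real.rpow_add hr0]; norm_num
    have h3 : ((r : ℕ) : ℝ) ^ (-(4 : ℝ)/7) ≤ R ^ (-(4 : ℝ)/7) :=
      Real.rpow_le_rpow_of_nonpos hR0 hr (by norm_num)
    calc g r ≤ 2 * C * N * ((r : ℕ) : ℝ) ^ (-(23 : ℝ)/14) := h1
      _ = 2 * C * N * (((r : ℕ) : ℝ) ^ (-(4 : ℝ)/7) * ((r : ℕ) : ℝ) ^ (-(15 : ℝ)/14)) := by
          rw [h2]
      _ ≤ 2 * C * N * (R ^ (-(4 : ℝ)/7) * ((r : ℕ) : ℝ) ^ (-(15 : ℝ)/14)) := by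
          have hCN : (0:ℝ) ≤ 2 * C * N := by positivity
          have := Real.rpow_nonneg (le_of_lt hr0) (-(15 : ℝ)/14)
          gcongr
      _ = 2 * C * N * R ^ (-(4 : ℝ)/7) * ((r : ℕ) : ℝ) ^ (-(15 : ℝ)/14) := by ring
  have hdom : Summable (fun r : S => 2 * C * N * R ^ (-(4 : ℝ)/7) * ((r : ℕ) : ℝ) ^ (-(15 : ℝ)/14)) :=
    hsum15S.mul_left _
  have hgsum : Summable g :=
    Summable.of_nonneg_of_le (fun r => norm_nonneg _) hterm hdom
  have houter : ∑' r : S, g r ≤ 2 * C * N * R ^ (-(4 : ℝ)/7) * c := by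
    calc ∑' r : S, g r
        ≤ ∑' r : S, 2 * C * N * R ^ (-(4 : ℝ)/7) * ((r : ℕ) : ℝ) ^ (-(15 : ℝ)/14) :=
          Summable.tsum_le_tsum hterm hgsum hdom
      _ = 2 * C * N * R ^ (-(4 : ℝ)/7) * ∑' r : S, ((r : ℕ) : ℝ) ^ (-(15 : ℝ)/14) :=
          tsum_mul_left
      _ ≤ 2 * C * N * R ^ (-(4 : ℝ)/7) * c := by
          have hle : ∑' r : S, ((r : ℕ) : ℝ) ^ (-(15 : ℝ)/14) ≤ c := by
            refine Summable.tsum_le_tsum_of_inj (Subtype.val) Subtype.val_injective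
              (fun m _ => Real.rpow_nonneg (Nat.cast_nonneg m) _)
              (fun r => le_refl _) hsum15S hsum15
          have : (0:ℝ) ≤ 2 * C * N * R ^ (-(4 : ℝ)/7) := by positivity
          gcongr
  -- Step C : final exponent arithmetic
  have hRexp : R ^ (-(4 : ℝ)/7) = M ^ (-(1 : ℝ)/14) * T ^ (-(6 : ℝ)/35) := by
    rw [hR, Real.mul_rpow (by positivity) (by positivity),
      ← Real.rpow_mul (le_of_lt hM0), ← Real.rpow_mul (le_of_lt hT0)]
    norm_num
  have hNsplit : N = N ^ ((1:ℝ)/2) * N ^ ((1:ℝ)/2) := by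
    rw [← Real.rpow_add hN0]; norm_num
  have hNhalf : N ^ ((1:ℝ)/2) ≤ P ^ (((3:ℝ) + ε)/2) := by
    have := Real.rpow_le_rpow (le_of_lt hN0) hNle (by norm_num : (0:ℝ) ≤ 1/2)
    rwa [← Real.rpow_mul (le_of_lt hP0), show ((3:ℝ) + ε) * (1/2) = ((3:ℝ) + ε)/2 by ring] at this
  have hPsplit : P ^ (((3:ℝ) + ε)/2) = M ^ ((3:ℝ)/2) * T ^ ((3:ℝ)/2) * P ^ (ε/2) := by
    have h32 : P ^ ((3:ℝ)/2) = M ^ ((3:ℝ)/2) * T ^ ((3:ℝ)/2) := by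
      rw [hP, Real.mul_rpow (le_of_lt hM0) (le_of_lt hT0)]
    rw [show ((3:ℝ) + ε)/2 = (3:ℝ)/2 + ε/2 by ring, Real.rpow_add hP0, h32]
  have key : N ^ ((1:ℝ)/2) * (M ^ (-(1:ℝ)/14) * T ^ (-(6:ℝ)/35))
      ≤ M ^ ((3:ℝ)/2 - 1/16) * T ^ ((3:ℝ)/2 - 3/20) * P ^ ε := by
    have m1 : M ^ ((3:ℝ)/2 - 1/14) ≤ M ^ ((3:ℝ)/2 - 1/16) :=
      Real.rpow_le_rpow_of_exponent_le hM (by norm_num)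
    have m2 : T ^ ((3:ℝ)/2 - 6/35) ≤ T ^ ((3:ℝ)/2 - 3/20) :=
      Real.rpow_le_rpow_of_exponent_le hT1 (by norm_num)
    have m3 : P ^ (ε/2) ≤ P ^ ε :=
      Real.rpow_le_rpow_of_exponent_le hP1 (by linarith)
    calc N ^ ((1:ℝ)/2) * (M ^ (-(1:ℝ)/14) * T ^ (-(6:ℝ)/35))
        ≤ P ^ (((3:ℝ) + ε)/2) * (M ^ (-(1:ℝ)/14) * T ^ (-(6:ℝ)/35)) :=
          mul_le_mul_of_nonneg_right hNhalf (by positivity)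
      _ = (M ^ ((3:ℝ)/2) * M ^ (-(1:ℝ)/14)) * (T ^ ((3:ℝ)/2) * T ^ (-(6:ℝ)/35))
            * P ^ (ε/2) := by rw [hPsplit]; ring
      _ = M ^ ((3:ℝ)/2 - 1/14) * T ^ ((3:ℝ)/2 - 6/35) * P ^ (ε/2) := by
          rw [← Real.rpow_add hM0, ← Real.rpow_add hT0]; norm_num
      _ ≤ M ^ ((3:ℝ)/2 - 1/16) * T ^ ((3:ℝ)/2 - 3/20) * P ^ ε := by
          exact mul_le_mul (mul_le_mul m1 m2 (by positivity) (by positivity)) m3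
            (by positivity) (by positivity)
  have hfinal : 2 * C * N * R ^ (-(4:ℝ)/7) * c
      ≤ 2 * C * c * N ^ ((1:ℝ)/2) * M ^ ((3:ℝ)/2 - 1/16)
        * T ^ ((3:ℝ)/2 - 3/20) * P ^ ε := by
    calc 2 * C * N * R ^ (-(4:ℝ)/7) * c
        = 2 * C * c * (N ^ ((1:ℝ)/2)
            * (N ^ ((1:ℝ)/2) * (M ^ (-(1:ℝ)/14) * T ^ (-(6:ℝ)/35)))) := by
          rw [hRexp]; nth_rw 1 [hNsplit]; ring
      _ ≤ 2 * C * c * (N ^ ((1:ℝ)/2)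
            * (M ^ ((3:ℝ)/2 - 1/16) * T ^ ((3:ℝ)/2 - 3/20) * P ^ ε)) := by
          refine mul_le_mul_of_nonneg_left
            (mul_le_mul_of_nonneg_left key (by positivity)) (by positivity)
      _ = 2 * C * c * N ^ ((1:ℝ)/2) * M ^ ((3:ℝ)/2 - 1/16)
            * T ^ ((3:ℝ)/2 - 3/20) * P ^ ε := by ring
  exact le_trans houter hfinal
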